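/- Let H be a complex Hilbert space, A and Ã continuous linear operators on H, z ∈ ℂ such that A − z and Ã − z are invertible, and suppose the resolvents are related by (Ã − z)⁻¹ = (A − z)⁻¹ + b_z(·, n)m for some b_z ∈ ℂ and m, n ∈ H. Let λ ∈ ℂ with λ ≠ z be such that A − λ is invertible, and let φ ∈ H, φ ≠ 0, satisfy Ãφ = λφ. Then, setting v := (A − z)(A − λ)⁻¹ m, one has: (i) (λ − z)·b_z·(v, n) = 1, and (ii) φ is a nonzero scalar multiple of v; in particular, for the normalized eigenvector φ = v one has (λ − z)·b_z·(φ, n) = 1. -/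

import Mathlib

open ContinuousLinearMap

local notation "⟪" x ", " y "⟫" => @inner ℂ _ _ x y

/-- Theorem 2 of the paper (regular-vector analogue): if the resolvents of `A` and `Ã`
are related by `(Ã - z)⁻¹ = (A - z)⁻¹ + b_z(·,n)m` and `Ãφ = λφ` with `φ ≠ 0`,
`λ ≠ z`, `λ ∉ σ(A)`, then with `v = (A - z)(A - λ)⁻¹ m` one has
`(λ - z) b_z (v, n) = 1` and `φ` is a nonzero multiple of `v`. -/
theorem eigenvalue_relation {H : Type*} [NormedAddCommGroup H] [InnerProductSpace ℂ H]
    [CompleteSpace H] (A At : H →L[ℂ] H) (z : ℂ)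
    (R : H →L[ℂ] H) (hR1 : (A - z • 1) ∘L R = 1) (hR2 : R ∘L (A - z • 1) = 1)
    (Rt : H →L[ℂ] H) (hRt1 : (At - z • 1) ∘L Rt = 1) (hRt2 : Rt ∘L (At - z • 1) = 1)
    (b : ℂ) (m n : H) (hrel : ∀ f : H, Rt f = R f + b • ⟪n, f⟫ • m)
    (lam : ℂ) (hlz : lam ≠ z)
    (L : H →L[ℂ] H) (hL1 : (A - lam • 1) ∘L L = 1) (hL2 : L ∘L (A - lam • 1) = 1)
    (φ : H) (hφ : φ ≠ 0) (heig : At φ = lam • φ) :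
    (lam - z) * b * ⟪n, (A - z • 1) (L m)⟫ = 1 ∧
      ∃ c : ℂ, c ≠ 0 ∧ φ = c • (A - z • 1) (L m) := by
  set v : H := (A - z • 1) (L m) with hv
  -- commute L with (A - z•1), via multiplication in the algebra
  have hL1' : (A - lam • 1) * L = 1 := hL1
  have hL2' : L * (A - lam • 1) = 1 := hL2
  have hcomm : (A - z • 1) * L = L * (A - z • 1) := by
    have h1 : (A - z • 1) * (A - lam • 1) = (A - lam • 1) * (A - z • 1) := by
      simp only [mul_sub, sub_mul, smul_mul_assoc, mul_smul_comm, one_mul, mul_one,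
        smul_sub, smul_smul, mul_comm z lam]
      abel
    calc (A - z • 1) * L = (L * (A - lam • 1)) * ((A - z • 1) * L) := by
          rw [hL2', one_mul]
      _ = L * ((A - lam • 1) * ((A - z • 1) * L)) := by rw [mul_assoc]
      _ = L * (((A - lam • 1) * (A - z • 1)) * L) := by
          rw [mul_assoc (A - lam • 1) (A - z • 1) L]
      _ = L * (((A - z • 1) * (A - lam • 1)) * L) := by rw [← h1]
      _ = L * ((A - z • 1) * ((A - lam • 1) * L)) := by
          rw [mul_assoc (A - z • 1) (A - lam • 1) L]
      _ = L * (A - z • 1) := by rw [hL1', mul_one]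
  have hLv : L ((A - z • 1) m) = v := by
    have := congrArg (fun f : H →L[ℂ] H => f m) hcomm
    simp only [mul_apply_eq_comp] at this
    exact this.symm
  -- (At - z)φ = (lam - z)•φ
  have h1 : (At - z • 1) φ = (lam - z) • φ := by
    simp [sub_apply, smul_apply, one_apply, heig, sub_smul]
  -- φ = (lam-z) • Rt φ
  have h2 : φ = (lam - z) • (R φ + b • ⟪n, φ⟫ • m) := by
    have := congrArg (fun f : H →L[ℂ] H => f φ) hRt2
    simp only [comp_apply, one_apply] at this
    rw [h1, map_smul, hrel] at this
    exact this.symm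
  -- apply (A - z•1)
  have h3 : (A - z • 1) φ = (lam - z) • φ + ((lam - z) * b * ⟪n, φ⟫) • (A - z • 1) m := by
    conv_lhs => rw [h2]
    have hRφ : (A - z • 1) (R φ) = φ := by
      have := congrArg (fun f : H →L[ℂ] H => f φ) hR1
      simpa using this
    rw [map_smul, map_add, hRφ, map_smul, map_smul, smul_add, smul_smul, smul_smul, mul_assoc]
  set c : ℂ := (lam - z) * b * ⟪n, φ⟫ with hc
  clear_value c
  -- (A - lam•1) φ = c • (A - z•1) m
  have h4 : (A - lam • 1) φ = c • (A - z • 1) m := by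
    have hsub : (A - lam • 1) φ = (A - z • 1) φ - (lam - z) • φ := by
      simp only [sub_apply, smul_apply, one_apply_eq_self, sub_smul]
      abel
    rw [hsub, h3]; abel
  -- φ = c • v
  have h5 : φ = c • v := by
    have := congrArg (fun f : H →L[ℂ] H => f φ) hL2
    simp only [comp_apply, one_apply] at this
    rw [h4, map_smul, hLv] at this
    exact this.symm
  have hcne : c ≠ 0 := by
    intro h0; apply hφ; rw [h5, h0, zero_smul]
  have key : c = (lam - z) * b * (c * ⟪n, v⟫) := by
    calc c = (lam - z) * b * ⟪n, φ⟫ := hc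
      _ = (lam - z) * b * (c * ⟪n, v⟫) := by rw [h5, inner_smul_right]
  constructor
  · have key2 : c * 1 = c * ((lam - z) * b * ⟪n, v⟫) := by
      rw [mul_one]; nth_rewrite 1 [key]; ring
    exact (mul_left_cancel₀ hcne key2).symm
  · exact ⟨c, hcne, h5⟩
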